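/- At each of the two points (π, arccos((1−√6)/5), (1/2)·arccos(1/(1+√6))) and (0, arccos((1−√6)/5), π − (1/2)·arccos(1/(1+√6))), the gradient of L₁ vanishes, L₁ takes the value (3/50)·(9+√6), and the Hessian matrix of L₁ is negative definite; hence these points are strict local (in fact global) maxima of L₁. -/

import Mathlib

open Matrix

/-- The kinematic landscape function `L₁(Ω,β₁,β₂)`. -/
noncomputable def L1 (Ω β₁ β₂ : ℝ) : ℝ :=
  (1/8) * Real.sin β₂ ^ 2 * (3 + Real.cos (2*β₁))
  + (1/2) * Real.sin β₁ ^ 2 * Real.cos β₂ ^ 2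
  - (1/2) * Real.cos Ω * Real.sin β₁ * Real.sin (β₁/2) ^ 2 * Real.sin (2*β₂)

/-- `L₁` as a function on `ℝ³`. -/
noncomputable def L1v (v : Fin 3 → ℝ) : ℝ := L1 (v 0) (v 1) (v 2)

/-- Hessian matrix of second partial derivatives of `f : ℝⁿ → ℝ` at `p`. -/
noncomputable def hessian {n : ℕ} (f : (Fin n → ℝ) → ℝ) (p : Fin n → ℝ) :
    Matrix (Fin n) (Fin n) ℝ :=
  Matrix.of fun i j => fderiv ℝ (fun y => fderiv ℝ f y (Pi.single j 1)) p (Pi.single i 1)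

namespace Stmt9aux
open Real

noncomputable def proj3 (i : Fin 3) : (Fin 3 → ℝ) →L[ℝ] ℝ := ContinuousLinearMap.proj i

noncomputable def lin3 (a b c : ℝ) : (Fin 3 → ℝ) →L[ℝ] ℝ :=
  a • proj3 0 + b • proj3 1 + c • proj3 2

lemma lin3_apply (a b c : ℝ) (v : Fin 3 → ℝ) : lin3 a b c v = a * v 0 + b * v 1 + c * v 2 := by
  simp [lin3, proj3]

lemma hproj (i : Fin 3) (y : Fin 3 → ℝ) :
    HasFDerivAt (fun y : Fin 3 → ℝ => y i) (proj3 i) y := hasFDerivAt_apply i y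

lemma comp1 {g : ℝ → ℝ} {g' : ℝ} (i : Fin 3) (y : Fin 3 → ℝ) (hg : HasDerivAt g g' (y i)) :
    HasFDerivAt (fun y : Fin 3 → ℝ => g (y i)) (g' • proj3 i) y :=
  hg.comp_hasFDerivAt y (hproj i y)

lemma hd_sinsq (u : ℝ) : HasDerivAt (fun v : ℝ => Real.sin v ^ 2) (2 * Real.sin u * Real.cos u) u := by
  simpa using (Real.hasDerivAt_sin u).fun_pow 2

lemma hd_cossq (u : ℝ) : HasDerivAt (fun v : ℝ => Real.cos v ^ 2) (-(2 * Real.sin u * Real.cos u)) u := by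
  have := (Real.hasDerivAt_cos u).fun_pow 2
  exact this.congr_deriv (by simp; ring)

lemma hd_cos2 (u : ℝ) : HasDerivAt (fun v : ℝ => Real.cos (2*v)) (-(2 * Real.sin (2*u))) u := by
  have := (Real.hasDerivAt_cos (2*u)).comp u ((hasDerivAt_id u).const_mul 2)
  exact this.congr_deriv (by ring)

lemma hd_3pcos2 (u : ℝ) : HasDerivAt (fun v : ℝ => 3 + Real.cos (2*v)) (-(2 * Real.sin (2*u))) u :=
  (hd_cos2 u).const_add 3

lemma hd_sin2 (u : ℝ) : HasDerivAt (fun v : ℝ => Real.sin (2*v)) (2 * Real.cos (2*u)) u := by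
  have := (Real.hasDerivAt_sin (2*u)).comp u ((hasDerivAt_id u).const_mul 2)
  exact this.congr_deriv (by ring)

lemma hd_sinhalf (u : ℝ) : HasDerivAt (fun v : ℝ => Real.sin (v/2)) (Real.cos (u/2) / 2) u := by
  have := (Real.hasDerivAt_sin (u/2)).comp u ((hasDerivAt_id u).div_const 2)
  exact this.congr_deriv (by ring)

lemma hd_coshalf (u : ℝ) : HasDerivAt (fun v : ℝ => Real.cos (v/2)) (-(Real.sin (u/2) / 2)) u := by
  have := (Real.hasDerivAt_cos (u/2)).comp u ((hasDerivAt_id u).div_const 2)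
  exact this.congr_deriv (by ring)

lemma hd_sinhalfsq (u : ℝ) :
    HasDerivAt (fun v : ℝ => Real.sin (v/2) ^ 2) (Real.sin (u/2) * Real.cos (u/2)) u := by
  have := (hd_sinhalf u).fun_pow 2
  exact this.congr_deriv (by simp; ring)

/-- the three partial derivative functions of `L1v` -/
noncomputable def G0 (y : Fin 3 → ℝ) : ℝ :=
  1/2 * Real.sin (y 0) * Real.sin (y 1) * Real.sin (y 1 / 2) ^ 2 * Real.sin (2 * y 2)

noncomputable def G1 (y : Fin 3 → ℝ) : ℝ :=
  -(1/4) * Real.sin (y 2) ^ 2 * Real.sin (2 * y 1)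
  + Real.sin (y 1) * Real.cos (y 1) * Real.cos (y 2) ^ 2
  - 1/2 * Real.cos (y 0) * (Real.cos (y 1) * Real.sin (y 1 / 2) ^ 2
      + Real.sin (y 1) * (Real.sin (y 1 / 2) * Real.cos (y 1 / 2))) * Real.sin (2 * y 2)

noncomputable def G2 (y : Fin 3 → ℝ) : ℝ :=
  1/4 * Real.sin (y 2) * Real.cos (y 2) * (3 + Real.cos (2 * y 1))
  - Real.sin (y 1) ^ 2 * Real.cos (y 2) * Real.sin (y 2)
  - Real.cos (y 0) * Real.sin (y 1) * Real.sin (y 1 / 2) ^ 2 * Real.cos (2 * y 2)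

lemma hasFDerivAt_L1v (y : Fin 3 → ℝ) :
    HasFDerivAt L1v (lin3 (G0 y) (G1 y) (G2 y)) y := by
  have hA := comp1 2 y (hd_sinsq (y 2))
  have hB := comp1 1 y (hd_3pcos2 (y 1))
  have hC := comp1 1 y (hd_sinsq (y 1))
  have hD := comp1 2 y (hd_cossq (y 2))
  have hE := comp1 0 y (Real.hasDerivAt_cos (y 0))
  have hF := comp1 1 y (Real.hasDerivAt_sin (y 1))
  have hG := comp1 1 y (hd_sinhalfsq (y 1))
  have hH := comp1 2 y (hd_sin2 (y 2))
  have H := (((hA.const_mul (1/8:ℝ)).mul hB).add ((hC.const_mul (1/2:ℝ)).mul hD)).sub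
      ((((hE.const_mul (1/2:ℝ)).mul hF).mul hG).mul hH)
  refine H.congr_fderiv ?_
  refine ContinuousLinearMap.ext fun v => ?_
  simp only [lin3, proj3, ContinuousLinearMap.add_apply, ContinuousLinearMap.coe_smul',
    Pi.smul_apply, ContinuousLinearMap.proj_apply, smul_eq_mul,
    ContinuousLinearMap.coe_sub', Pi.sub_apply, Pi.mul_apply, G0, G1, G2]
  ring

noncomputable def D00 (y : Fin 3 → ℝ) : ℝ :=
  1/2 * Real.cos (y 0) * Real.sin (y 1) * Real.sin (y 1 / 2) ^ 2 * Real.sin (2 * y 2)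
noncomputable def D10 (y : Fin 3 → ℝ) : ℝ :=
  1/2 * Real.sin (y 0) * (Real.cos (y 1) * Real.sin (y 1 / 2) ^ 2
    + Real.sin (y 1) * (Real.sin (y 1 / 2) * Real.cos (y 1 / 2))) * Real.sin (2 * y 2)
noncomputable def D20 (y : Fin 3 → ℝ) : ℝ :=
  Real.sin (y 0) * Real.sin (y 1) * Real.sin (y 1 / 2) ^ 2 * Real.cos (2 * y 2)
noncomputable def D11 (y : Fin 3 → ℝ) : ℝ :=
  -(1/2) * Real.sin (y 2) ^ 2 * Real.cos (2 * y 1)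
  + (Real.cos (y 1) ^ 2 - Real.sin (y 1) ^ 2) * Real.cos (y 2) ^ 2
  - 1/2 * Real.cos (y 0) * (-(Real.sin (y 1)) * Real.sin (y 1 / 2) ^ 2
      + 2 * Real.cos (y 1) * (Real.sin (y 1 / 2) * Real.cos (y 1 / 2))
      + 1/2 * Real.sin (y 1) * (Real.cos (y 1 / 2) ^ 2 - Real.sin (y 1 / 2) ^ 2)) * Real.sin (2 * y 2)
noncomputable def D21 (y : Fin 3 → ℝ) : ℝ :=
  -(1/2) * Real.sin (y 2) * Real.cos (y 2) * Real.sin (2 * y 1)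
  - 2 * Real.sin (y 1) * Real.cos (y 1) * Real.cos (y 2) * Real.sin (y 2)
  - Real.cos (y 0) * (Real.cos (y 1) * Real.sin (y 1 / 2) ^ 2
      + Real.sin (y 1) * (Real.sin (y 1 / 2) * Real.cos (y 1 / 2))) * Real.cos (2 * y 2)
noncomputable def D22 (y : Fin 3 → ℝ) : ℝ :=
  1/4 * (Real.cos (y 2) ^ 2 - Real.sin (y 2) ^ 2) * (3 + Real.cos (2 * y 1))
  - Real.sin (y 1) ^ 2 * (Real.cos (y 2) ^ 2 - Real.sin (y 2) ^ 2)
  + 2 * Real.cos (y 0) * Real.sin (y 1) * Real.sin (y 1 / 2) ^ 2 * Real.sin (2 * y 2)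

lemma hasFDerivAt_G0 (y : Fin 3 → ℝ) :
    HasFDerivAt G0 (lin3 (D00 y) (D10 y) (D20 y)) y := by
  have hF := comp1 1 y (Real.hasDerivAt_sin (y 1))
  have hG := comp1 1 y (hd_sinhalfsq (y 1))
  have hH := comp1 2 y (hd_sin2 (y 2))
  have hS0 := comp1 0 y (Real.hasDerivAt_sin (y 0))
  have H := (((hS0.const_mul (1/2:ℝ)).mul hF).mul hG).mul hH
  refine H.congr_fderiv ?_
  refine ContinuousLinearMap.ext fun v => ?_
  simp only [lin3, proj3, ContinuousLinearMap.add_apply, ContinuousLinearMap.coe_smul',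
    Pi.smul_apply, ContinuousLinearMap.proj_apply, smul_eq_mul,
    ContinuousLinearMap.coe_sub', Pi.sub_apply, Pi.mul_apply, D00, D10, D20]
  ring

lemma hasFDerivAt_G1 (y : Fin 3 → ℝ) :
    HasFDerivAt G1 (lin3 (D10 y) (D11 y) (D21 y)) y := by
  have hA := comp1 2 y (hd_sinsq (y 2))
  have hB := comp1 1 y (hd_sin2 (y 1))
  have hC := comp1 1 y (hd_sinsq (y 1))
  have hD := comp1 2 y (hd_cossq (y 2))
  have hE := comp1 0 y (Real.hasDerivAt_cos (y 0))
  have hF := comp1 1 y (Real.hasDerivAt_sin (y 1))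
  have hG := comp1 1 y (hd_sinhalfsq (y 1))
  have hH := comp1 2 y (hd_sin2 (y 2))
  have hCos1 := comp1 1 y (Real.hasDerivAt_cos (y 1))
  have hSH := comp1 1 y (hd_sinhalf (y 1))
  have hCH := comp1 1 y (hd_coshalf (y 1))
  have hInner := (hCos1.mul hG).add (hF.mul (hSH.mul hCH))
  have H := (((hA.const_mul (-(1/4):ℝ)).mul hB).add ((hF.mul hCos1).mul hD)).sub
      (((hE.const_mul (1/2:ℝ)).mul hInner).mul hH)
  refine H.congr_fderiv ?_
  refine ContinuousLinearMap.ext fun v => ?_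
  simp only [lin3, proj3, ContinuousLinearMap.add_apply, ContinuousLinearMap.coe_smul',
    Pi.smul_apply, ContinuousLinearMap.proj_apply, smul_eq_mul,
    ContinuousLinearMap.coe_sub', Pi.sub_apply, Pi.mul_apply, Pi.add_apply, D10, D11, D21]
  ring

lemma hasFDerivAt_G2 (y : Fin 3 → ℝ) :
    HasFDerivAt G2 (lin3 (D20 y) (D21 y) (D22 y)) y := by
  have hB := comp1 1 y (hd_3pcos2 (y 1))
  have hC := comp1 1 y (hd_sinsq (y 1))
  have hE := comp1 0 y (Real.hasDerivAt_cos (y 0))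
  have hF := comp1 1 y (Real.hasDerivAt_sin (y 1))
  have hG := comp1 1 y (hd_sinhalfsq (y 1))
  have hSin2c := comp1 2 y (Real.hasDerivAt_sin (y 2))
  have hCos2c := comp1 2 y (Real.hasDerivAt_cos (y 2))
  have hCos2y2 := comp1 2 y (hd_cos2 (y 2))
  have H := ((((hSin2c.const_mul (1/4:ℝ)).mul hCos2c).mul hB).sub
      ((hC.mul hCos2c).mul hSin2c)).sub (((hE.mul hF).mul hG).mul hCos2y2)
  refine H.congr_fderiv ?_
  refine ContinuousLinearMap.ext fun v => ?_
  simp only [lin3, proj3, ContinuousLinearMap.add_apply, ContinuousLinearMap.coe_smul',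
    Pi.smul_apply, ContinuousLinearMap.proj_apply, smul_eq_mul,
    ContinuousLinearMap.coe_sub', Pi.sub_apply, Pi.mul_apply, D20, D21, D22]
  ring

lemma fderiv_L1v_single (y : Fin 3 → ℝ) (j : Fin 3) :
    fderiv ℝ L1v y (Pi.single j 1) = ![G0 y, G1 y, G2 y] j := by
  rw [(hasFDerivAt_L1v y).fderiv]
  fin_cases j <;> simp [lin3_apply, Pi.single_apply]

lemma hess_col (p : Fin 3 → ℝ) (i : Fin 3) :
    (hessian L1v p i 0 = lin3 (D00 p) (D10 p) (D20 p) (Pi.single i 1))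
    ∧ (hessian L1v p i 1 = lin3 (D10 p) (D11 p) (D21 p) (Pi.single i 1))
    ∧ (hessian L1v p i 2 = lin3 (D20 p) (D21 p) (D22 p) (Pi.single i 1)) := by
  refine ⟨?_, ?_, ?_⟩
  · show fderiv ℝ (fun y => fderiv ℝ L1v y (Pi.single 0 1)) p (Pi.single i 1) = _
    have h : (fun y => fderiv ℝ L1v y (Pi.single (0:Fin 3) 1)) = G0 := by
      funext y; rw [fderiv_L1v_single]; rfl
    rw [h, (hasFDerivAt_G0 p).fderiv]
  · show fderiv ℝ (fun y => fderiv ℝ L1v y (Pi.single 1 1)) p (Pi.single i 1) = _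
    have h : (fun y => fderiv ℝ L1v y (Pi.single (1:Fin 3) 1)) = G1 := by
      funext y; rw [fderiv_L1v_single]; rfl
    rw [h, (hasFDerivAt_G1 p).fderiv]
  · show fderiv ℝ (fun y => fderiv ℝ L1v y (Pi.single 2 1)) p (Pi.single i 1) = _
    have h : (fun y => fderiv ℝ L1v y (Pi.single (2:Fin 3) 1)) = G2 := by
      funext y; rw [fderiv_L1v_single]; rfl
    rw [h, (hasFDerivAt_G2 p).fderiv]

lemma hess_entries (p : Fin 3 → ℝ) :
    hessian L1v p = Matrix.of ![![D00 p, D10 p, D20 p], ![D10 p, D11 p, D21 p], ![D20 p, D21 p, D22 p]] := by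
  ext i j
  fin_cases j <;> fin_cases i <;>
    simp [(hess_col p _).1, (hess_col p _).2.1, (hess_col p _).2.2, lin3_apply, Pi.single_apply]

set_option maxHeartbeats 2000000

lemma abs2_le (X Y : ℝ) (hY : 0 ≤ Y) (h : X^2 ≤ Y^2) : -X ≤ Y ∧ X ≤ Y := by
  constructor <;> nlinarith

/-- Core algebraic inequality. -/
lemma core (r cΩ x s1 t u : ℝ) (hr : r^2 = 6) (hr1 : 2 ≤ r) (hr2 : r ≤ 5/2)
    (hc : cΩ^2 ≤ 1) (h2 : x^2 + s1^2 = 1) (h3 : t^2 + u^2 = 1) :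
    (1/8)*(1-t)*(1+x^2) + (1/4)*(1-x^2)*(1+t) - (1/4)*cΩ*s1*(1-x)*u ≤ (3/50)*(9+r) := by
  have hx1 : x ≤ 1 := by nlinarith only [h2, sq_nonneg s1, sq_nonneg (x-1)]
  have hxm1 : -1 ≤ x := by nlinarith only [h2, sq_nonneg s1, sq_nonneg (x+1)]
  have hsabs : |s1|^2 = s1^2 := sq_abs s1
  have hvabs : |u|^2 = u^2 := sq_abs u
  have hsv0 : (0:ℝ) ≤ |s1| * |u| := by positivity
  have hmixsq : (cΩ*s1*u)^2 ≤ (|s1| * |u|)^2 := by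
    have h' : (|s1| * |u|)^2 = s1^2*u^2 := by rw [mul_pow, sq_abs, sq_abs]
    nlinarith only [h', hc, sq_nonneg (s1*u), sq_abs cΩ]
  have h1 : -(cΩ*s1*u) ≤ |s1| * |u| := (abs2_le _ _ hsv0 hmixsq).1
  have hN0 : (0:ℝ) ≤ (3/50)*(9+r) - (3-x^2)/8 := by linarith only [sq_nonneg x, hr1]
  have hq : (0:ℝ) ≤ -25*x^2+(10*r-60)*x+13+32*r := by
    linarith only [h2, sq_nonneg s1, hr1, mul_nonneg (show (0:ℝ) ≤ 60-10*r by linarith)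
      (show (0:ℝ) ≤ 1-x by linarith)]
  have hc2eq : ((1-x)*|s1|/4)^2 = (1-x)^2*(1-x^2)/16 := by
    have h' : |s1|^2 = 1-x^2 := by rw [sq_abs]; linarith
    calc ((1-x)*|s1|/4)^2 = (1-x)^2*(|s1|^2)/16 := by ring
    _ = (1-x)^2*(1-x^2)/16 := by rw [h']
  have key : ((3/50)*(9+r) - (3-x^2)/8)^2 - ((1-3*x^2)/8)^2 - (1-x)^2*(1-x^2)/16
      = (5*x-1+r)^2 * ((-25*x^2+(10*r-60)*x+13+32*r)/10000) := by
    linear_combination ((87-240*x-75*x^2-32*r-10*r*x)/10000) * hr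
  have hP : ((1-3*x^2)/8)^2 + ((1-x)*|s1|/4)^2 ≤ ((3/50)*(9+r) - (3-x^2)/8)^2 := by
    rw [hc2eq]
    linarith only [key, mul_nonneg (sq_nonneg (5*x-1+r))
      (show (0:ℝ) ≤ (-25*x^2+(10*r-60)*x+13+32*r)/10000 by linarith)]
  have expand : ((1-3*x^2)/8*t + (1-x)*|s1|/4*|u|)^2 + ((1-3*x^2)/8*|u| - (1-x)*|s1|/4*t)^2
      = (((1-3*x^2)/8)^2 + ((1-x)*|s1|/4)^2)*(t^2+|u|^2) := by ring
  have h3' : t^2 + |u|^2 = 1 := by rw [hvabs]; linarith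
  have e2 : (((1-3*x^2)/8)^2 + ((1-x)*|s1|/4)^2)*(t^2+|u|^2)
      = ((1-3*x^2)/8)^2 + ((1-x)*|s1|/4)^2 := by rw [h3', mul_one]
  have hcs : ((1-3*x^2)/8*t + (1-x)*|s1|/4*|u|)^2 ≤ ((3/50)*(9+r) - (3-x^2)/8)^2 := by
    linarith only [expand, e2, hP, sq_nonneg ((1-3*x^2)/8*|u| - (1-x)*|s1|/4*t)]
  have hC : (1-3*x^2)/8*t + (1-x)*|s1|/4*|u| ≤ (3/50)*(9+r) - (3-x^2)/8 :=
    (abs2_le _ _ hN0 hcs).2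
  linarith only [mul_le_mul_of_nonneg_left h1 (show (0:ℝ) ≤ (1-x)/4 by linarith), hC]

/-- Equality case of the core inequality. -/
lemma core_eq (r cΩ x s1 t u : ℝ) (hr : r^2 = 6) (hr1 : 2 ≤ r) (hr2 : r ≤ 5/2)
    (hc : cΩ^2 ≤ 1) (h2 : x^2 + s1^2 = 1) (h3 : t^2 + u^2 = 1)
    (heq : (1/8)*(1-t)*(1+x^2) + (1/4)*(1-x^2)*(1+t) - (1/4)*cΩ*s1*(1-x)*u = (3/50)*(9+r)) :
    x = (1-r)/5 ∧ t = (r-1)/5 ∧ cΩ*s1*u = -(|s1| * |u|) := by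
  have hx1 : x ≤ 1 := by nlinarith only [h2, sq_nonneg s1, sq_nonneg (x-1)]
  have hxm1 : -1 ≤ x := by nlinarith only [h2, sq_nonneg s1, sq_nonneg (x+1)]
  have hsabs : |s1|^2 = s1^2 := sq_abs s1
  have hvabs : |u|^2 = u^2 := sq_abs u
  have hs0 : (0:ℝ) ≤ |s1| := abs_nonneg _
  have hv0 : (0:ℝ) ≤ |u| := abs_nonneg _
  have hsv0 : (0:ℝ) ≤ |s1| * |u| := by positivity
  have hmixsq : (cΩ*s1*u)^2 ≤ (|s1| * |u|)^2 := by
    have h' : (|s1| * |u|)^2 = s1^2*u^2 := by rw [mul_pow, sq_abs, sq_abs]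
    nlinarith only [h', hc, sq_nonneg (s1*u), sq_abs cΩ]
  have h1 : -(cΩ*s1*u) ≤ |s1| * |u| := (abs2_le _ _ hsv0 hmixsq).1
  have hN0 : (0:ℝ) ≤ (3/50)*(9+r) - (3-x^2)/8 := by linarith only [sq_nonneg x, hr1]
  have hq : (0:ℝ) ≤ -25*x^2+(10*r-60)*x+13+32*r := by
    linarith only [h2, sq_nonneg s1, hr1, mul_nonneg (show (0:ℝ) ≤ 60-10*r by linarith)
      (show (0:ℝ) ≤ 1-x by linarith)]
  have hc2eq : ((1-x)*|s1|/4)^2 = (1-x)^2*(1-x^2)/16 := by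
    have h' : |s1|^2 = 1-x^2 := by rw [sq_abs]; linarith
    calc ((1-x)*|s1|/4)^2 = (1-x)^2*(|s1|^2)/16 := by ring
    _ = (1-x)^2*(1-x^2)/16 := by rw [h']
  have key : ((3/50)*(9+r) - (3-x^2)/8)^2 - ((1-3*x^2)/8)^2 - (1-x)^2*(1-x^2)/16
      = (5*x-1+r)^2 * ((-25*x^2+(10*r-60)*x+13+32*r)/10000) := by
    linear_combination ((87-240*x-75*x^2-32*r-10*r*x)/10000) * hr
  have hP : ((1-3*x^2)/8)^2 + ((1-x)*|s1|/4)^2 ≤ ((3/50)*(9+r) - (3-x^2)/8)^2 := by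
    rw [hc2eq]
    linarith only [key, mul_nonneg (sq_nonneg (5*x-1+r))
      (show (0:ℝ) ≤ (-25*x^2+(10*r-60)*x+13+32*r)/10000 by linarith)]
  have expand : ((1-3*x^2)/8*t + (1-x)*|s1|/4*|u|)^2 + ((1-3*x^2)/8*|u| - (1-x)*|s1|/4*t)^2
      = (((1-3*x^2)/8)^2 + ((1-x)*|s1|/4)^2)*(t^2+|u|^2) := by ring
  have h3' : t^2 + |u|^2 = 1 := by rw [hvabs]; linarith
  have e2 : (((1-3*x^2)/8)^2 + ((1-x)*|s1|/4)^2)*(t^2+|u|^2)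
      = ((1-3*x^2)/8)^2 + ((1-x)*|s1|/4)^2 := by rw [h3', mul_one]
  have hcs : ((1-3*x^2)/8*t + (1-x)*|s1|/4*|u|)^2 ≤ ((3/50)*(9+r) - (3-x^2)/8)^2 := by
    linarith only [expand, e2, hP, sq_nonneg ((1-3*x^2)/8*|u| - (1-x)*|s1|/4*t)]
  have hC : (1-3*x^2)/8*t + (1-x)*|s1|/4*|u| ≤ (3/50)*(9+r) - (3-x^2)/8 :=
    (abs2_le _ _ hN0 hcs).2
  -- x < 1 strictly
  have hx1' : x < 1 := by
    rcases lt_or_eq_of_le hx1 with h | h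
    · exact h
    · exfalso
      have hs10 : s1 = 0 := by
        have h9 : s1^2 = 0 := by rw [h] at h2; linarith
        exact sq_eq_zero_iff.1 h9
      rw [h, hs10] at heq
      nlinarith only [heq, h3, sq_nonneg u, hr1]
  -- all inequalities are equalities
  have hmix : -(cΩ*s1*u) = |s1| * |u| := by
    by_contra hne
    have hlt : -(cΩ*s1*u) < |s1| * |u| := lt_of_le_of_ne h1 hne
    linarith only [heq, mul_lt_mul_of_pos_left hlt (show (0:ℝ) < (1-x)/4 by linarith), hC]
  have hCeq : (1-3*x^2)/8*t + (1-x)*|s1|/4*|u| = (3/50)*(9+r) - (3-x^2)/8 := by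
    by_contra hne
    have hlt := lt_of_le_of_ne hC hne
    linarith only [heq, hlt, mul_le_mul_of_nonneg_left h1 (show (0:ℝ) ≤ (1-x)/4 by linarith)]
  have hsq : ((1-3*x^2)/8*t + (1-x)*|s1|/4*|u|)^2 = ((3/50)*(9+r) - (3-x^2)/8)^2 := by
    rw [hCeq]
  have hPeq : ((1-3*x^2)/8)^2 + ((1-x)*|s1|/4)^2 = ((3/50)*(9+r) - (3-x^2)/8)^2 := by
    linarith only [hsq, expand, e2, hP, sq_nonneg ((1-3*x^2)/8*|u| - (1-x)*|s1|/4*t)]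
  have hxeq : x = (1-r)/5 := by
    have h5 : (5*x-1+r)^2 * ((-25*x^2+(10*r-60)*x+13+32*r)/10000) = 0 := by
      rw [← key, ← hc2eq]; linarith only [hPeq]
    have hqpos : (0:ℝ) < -25*x^2+(10*r-60)*x+13+32*r := by
      linarith only [h2, sq_nonneg s1, hr1, mul_nonneg (show (0:ℝ) ≤ 60-10*r by linarith)
        (show (0:ℝ) ≤ 1-x by linarith)]
    have h6 : (5*x-1+r)^2 = 0 := by
      rcases mul_eq_zero.1 h5 with h | h
      · exact h
      · exfalso; rw [div_eq_zero_iff] at h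
        rcases h with h | h
        · linarith
        · norm_num at h
    have := sq_eq_zero_iff.1 h6
    linarith
  have hcz : (1-3*x^2)/8*|u| - (1-x)*|s1|/4*t = 0 := by
    have h7 : ((1-3*x^2)/8*|u| - (1-x)*|s1|/4*t)^2 = 0 := by
      linarith only [hsq, expand, e2, hPeq]
    exact sq_eq_zero_iff.1 h7
  have hs1sq : |s1|^2 = (18+2*r)/25 := by
    rw [sq_abs]; rw [hxeq] at h2; linear_combination h2 - (1/25)*hr
  have hspos : (0:ℝ) < |s1| := by nlinarith only [hs1sq, hs0, hr1, sq_nonneg (|s1|-1)]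
  have ha0 : (1-3*x^2)/8 = (2+3*r)/100 := by rw [hxeq]; linear_combination (-3/200)*hr
  have hcc : (1-x)*|s1|/4 = (4+r)*|s1|/20 := by rw [hxeq]; ring
  have hNv : (3/50)*(9+r) - (3-x^2)/8 = (20+5*r)/100 := by rw [hxeq]; linear_combination (1/200)*hr
  have hcpos : (0:ℝ) < (4+r)*|s1|/20 := by positivity
  have heq2 : (2+3*r)/100*|u| = (4+r)*|s1|/20*t := by
    rw [ha0, hcc] at hcz; linarith
  have ht0 : 0 ≤ t := by
    by_contra hneg
    push_neg at hneg
    linarith only [mul_pos hcpos (neg_pos.2 hneg), heq2,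
      mul_nonneg (show (0:ℝ) ≤ (2+3*r)/100 by linarith) hv0]
  have hv2 : |u|^2 = 1 - t^2 := by rw [hvabs]; linarith
  have hPv : ((2+3*r)/100)^2 + ((4+r)*|s1|/20)^2 = ((20+5*r)/100)^2 := by
    rw [← ha0, ← hcc, ← hNv]; exact hPeq
  have hsq2 : ((2+3*r)/100*|u|)^2 = ((4+r)*|s1|/20*t)^2 := by rw [heq2]
  have hu2a : ((2+3*r)/100)^2*|u|^2 = ((2+3*r)/100)^2*(1-t^2) := by rw [hv2]
  have hPt : (((2+3*r)/100)^2 + ((4+r)*|s1|/20)^2)*t^2 = ((20+5*r)/100)^2*t^2 := by rw [hPv]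
  have ht2 : ((20+5*r)/100)^2 * t^2 = ((2+3*r)/100)^2 := by
    linarith only [hsq2, hu2a, hPt, hv2]
  have hfac : ((20+5*r)/100)^2*((t-(r-1)/5)*(t+(r-1)/5)) = 0 := by
    linear_combination ht2 + (1/5000 - (3/5000)*r - (1/10000)*r^2) * hr
  have hteq : t = (r-1)/5 := by
    have hNpos : (0:ℝ) < ((20+5*r)/100)^2 := by positivity
    rcases mul_eq_zero.1 hfac with h | h
    · exact absurd h (ne_of_gt hNpos)
    · rcases mul_eq_zero.1 h with h' | h'
      · linarith
      · exfalso; nlinarith only [h', ht0, hr1]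
  exact ⟨hxeq, hteq, by linarith [hmix]⟩


-- ## Trigonometric helpers

lemma sin_half_sq (b : ℝ) : Real.sin (b/2)^2 = (1 - Real.cos b)/2 := by
  have h1 := Real.sin_sq_add_cos_sq (b/2)
  have h2 : Real.cos b = 2*Real.cos (b/2)^2 - 1 := by
    have := Real.cos_two_mul (b/2)
    rwa [show 2*(b/2) = b by ring] at this
  linarith

lemma cos_half_sq (b : ℝ) : Real.cos (b/2)^2 = (1 + Real.cos b)/2 := by
  have h1 := Real.sin_sq_add_cos_sq (b/2)
  have := sin_half_sq b
  linarith

lemma sin_half_mul (b : ℝ) : Real.sin (b/2) * Real.cos (b/2) = Real.sin b / 2 := by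
  have := Real.sin_two_mul (b/2)
  rw [show 2*(b/2) = b by ring] at this
  linarith

lemma L1_eq (a b c : ℝ) : L1 a b c
    = (1/8)*(1-Real.cos (2*c))*(1+Real.cos b^2) + (1/4)*(1-Real.cos b^2)*(1+Real.cos (2*c))
      - (1/4)*Real.cos a*Real.sin b*(1-Real.cos b)*Real.sin (2*c) := by
  unfold L1
  have h1 : Real.sin c^2 = 1 - Real.cos c^2 := by linarith [Real.sin_sq_add_cos_sq c]
  have h5 : Real.sin b^2 = 1 - Real.cos b^2 := by linarith [Real.sin_sq_add_cos_sq b]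
  rw [h1, Real.cos_two_mul b, sin_half_sq b, Real.cos_two_mul c, h5]
  ring

-- ## facts about √6

lemma r6sq : Real.sqrt 6 ^ 2 = 6 := Real.sq_sqrt (by norm_num)
lemma r6ge : 2 ≤ Real.sqrt 6 := by nlinarith only [r6sq, Real.sqrt_nonneg 6]
lemma r6le : Real.sqrt 6 ≤ 5/2 := by nlinarith only [r6sq, Real.sqrt_nonneg 6]

-- ## global bound and equality analysis, in trig form

lemma global_bound (y : Fin 3 → ℝ) : L1v y ≤ (3/50)*(9 + Real.sqrt 6) := by
  have h := L1_eq (y 0) (y 1) (y 2)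
  have h0 : L1v y = L1 (y 0) (y 1) (y 2) := rfl
  rw [h0, h]
  exact core (Real.sqrt 6) (Real.cos (y 0)) (Real.cos (y 1)) (Real.sin (y 1))
    (Real.cos (2*y 2)) (Real.sin (2*y 2)) r6sq r6ge r6le
    (by nlinarith only [Real.sin_sq_add_cos_sq (y 0), sq_nonneg (Real.sin (y 0))])
    (by linarith [Real.sin_sq_add_cos_sq (y 1)])
    (by linarith [Real.sin_sq_add_cos_sq (2*y 2)])

lemma max_point_eqs (y : Fin 3 → ℝ) (hy : L1v y = (3/50)*(9 + Real.sqrt 6)) :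
    Real.cos (y 1) = (1 - Real.sqrt 6)/5 ∧ Real.cos (2*y 2) = (Real.sqrt 6 - 1)/5 ∧
      Real.cos (y 0) * Real.sin (y 1) * Real.sin (2*y 2)
        = -(|Real.sin (y 1)| * |Real.sin (2*y 2)|) := by
  have h := L1_eq (y 0) (y 1) (y 2)
  have h0 : L1v y = L1 (y 0) (y 1) (y 2) := rfl
  rw [h0, h] at hy
  exact core_eq (Real.sqrt 6) (Real.cos (y 0)) (Real.cos (y 1)) (Real.sin (y 1))
    (Real.cos (2*y 2)) (Real.sin (2*y 2)) r6sq r6ge r6le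
    (by nlinarith only [Real.sin_sq_add_cos_sq (y 0), sq_nonneg (Real.sin (y 0))])
    (by linarith [Real.sin_sq_add_cos_sq (y 1)])
    (by linarith [Real.sin_sq_add_cos_sq (2*y 2)]) hy

-- ## the value and the Hessian at the critical points

lemma at_point (p : Fin 3 → ℝ) (r σ : ℝ) (hr : r^2 = 6)
    (hS : σ^2 = 1)
    (h0c : Real.cos (p 0) = -σ) (h0s : Real.sin (p 0) = 0)
    (hc1 : Real.cos (p 1) = (1-r)/5) (hA : Real.sin (p 1)^2 = (18+2*r)/25)
    (hB : Real.sin (p 1/2)^2 = (4+r)/10) (hCh : Real.cos (p 1/2)^2 = (6-r)/10)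
    (hD : Real.sin (p 1/2)*Real.cos (p 1/2) = Real.sin (p 1)/2)
    (hc2 : Real.cos (2*p 2) = (r-1)/5) (hs2 : Real.sin (2*p 2) = σ*Real.sin (p 1))
    (hE : Real.sin (p 2)^2 = (6-r)/10) (hF : Real.cos (p 2)^2 = (4+r)/10)
    (hG : Real.sin (p 2)*Real.cos (p 2) = σ*Real.sin (p 1)/2) :
    L1v p = (3/50)*(9+r)
    ∧ hessian L1v p = Matrix.of ![![-(42+13*r)/250, 0, 0],
        ![0, -(32+23*r)/100, σ*(13*r-8)/50], ![0, σ*(13*r-8)/50, -(4+r)/5]] := by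
  constructor
  · have h0 : L1v p = L1 (p 0) (p 1) (p 2) := rfl
    rw [h0, L1_eq, h0c, hc1, hc2, hs2]
    linear_combination ((1/5)*σ^2 + (1/20)*r*σ^2) * hA
      + (18/125 + (13/250)*r + (1/250)*r^2) * hS + (1/125 - (3/1000)*r) * hr
  · have E00 : D00 p = -(42+13*r)/250 := by
      rw [D00, h0c, hs2]
      linear_combination ((-1/2)*σ^2*Real.sin (p 1)^2) * hB
        + ((-1/5)*σ^2 + (-1/20)*r*σ^2) * hA
        + ((-18/125) + (-13/250)*r + (-1/250)*r^2) * hS + (-1/250) * hr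
    have E10 : D10 p = 0 := by rw [D10, h0s]; ring
    have E20 : D20 p = 0 := by rw [D20, h0s]; ring
    have E11 : D11 p = -(32+23*r)/100 := by
      rw [D11, Real.cos_two_mul, h0c, hc1, hs2]
      linear_combination ((-3/4)*σ^2*Real.sin (p 1)^2) * hB
        + ((1/4)*σ^2*Real.sin (p 1)^2) * hCh
        + ((1/5)*σ^2*Real.sin (p 1) + (-1/5)*r*σ^2*Real.sin (p 1)) * hD
        + (23/50 + (2/25)*r + (-1/25)*r^2) * hE
        + (1/25 - Real.sin (p 1)^2 + (-2/25)*r + (1/25)*r^2) * hF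
        + ((-2/5) + (-1/20)*σ^2 + (-1/10)*r + (-1/5)*r*σ^2) * hA
        + ((-9/250) + (-37/250)*r + (-2/125)*r^2) * hS
        + ((-6/125) + (1/125)*r) * hr
    have E21 : D21 p = σ*(13*r-8)/50 := by
      rw [D21, Real.sin_two_mul, h0c, hc1, hc2]
      linear_combination ((-1/25)*σ + (2/25)*r*σ + (-1/25)*r^2*σ) * hB
        + ((-1/5)*σ*Real.sin (p 1) + (1/5)*r*σ*Real.sin (p 1)) * hD
        + ((-3/5)*Real.sin (p 1) + (3/5)*r*Real.sin (p 1)) * hG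
        + ((-2/5)*σ + (2/5)*r*σ) * hA
        + ((3/125)*σ + (-1/250)*r*σ) * hr
    have E22 : D22 p = -(4+r)/5 := by
      rw [D22, Real.cos_two_mul, h0c, hc1, hs2]
      linear_combination ((-2)*σ^2*Real.sin (p 1)^2) * hB
        + ((-13/25) + Real.sin (p 1)^2 + (1/25)*r + (-1/50)*r^2) * hE
        + (13/25 - Real.sin (p 1)^2 + (-1/25)*r + (1/50)*r^2) * hF
        + (1/5 + (-4/5)*σ^2 + (-1/5)*r + (-1/5)*r*σ^2) * hA
        + ((-72/125) + (-26/125)*r + (-2/125)*r^2) * hS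
        + ((-11/250) + (1/250)*r) * hr
    rw [hess_entries p, E00, E10, E20, E11, E21, E22]

-- ## negative definiteness of the quadratic form

lemma qform_neg (r σ : ℝ) (hr : r^2=6) (hr1 : 2 ≤ r) (hr2 : r ≤ 5/2) (hS : σ^2 = 1)
    (H : Matrix (Fin 3) (Fin 3) ℝ)
    (hH : H = Matrix.of ![![-(42+13*r)/250, 0, 0],
      ![0, -(32+23*r)/100, σ*(13*r-8)/50], ![0, σ*(13*r-8)/50, -(4+r)/5]]) :
    ∀ v : Fin 3 → ℝ, v ≠ 0 → v ⬝ᵥ H.mulVec v < 0 := by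
  intro v hv
  have hexp : v ⬝ᵥ H.mulVec v
      = (-(42+13*r)/250)*(v 0)^2 + (-(32+23*r)/100)*(v 1)^2
        + 2*(σ*(13*r-8)/50)*(v 1)*(v 2) + (-(4+r)/5)*(v 2)^2 := by
    rw [hH]
    simp [Matrix.mulVec, dotProduct, Fin.sum_univ_three, Matrix.vecHead, Matrix.vecTail]
    ring
  have hσ : σ = 1 ∨ σ = -1 := by
    rcases mul_eq_zero.1 (show (σ-1)*(σ+1) = 0 by linear_combination hS) with h | h
    · left; linarith
    · right; linarith
  have hQ : v ⬝ᵥ H.mulVec v ≤ -(1/10)*((v 0)^2+(v 1)^2+(v 2)^2) := by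
    rw [hexp]
    rcases hσ with h | h <;> rw [h] <;>
      nlinarith only [hr, hr1, hr2, sq_nonneg (v 0), sq_nonneg (v 1), sq_nonneg (v 2),
        sq_nonneg ((22+23*r)*(v 1) - 2*(13*r-8)*(v 2)),
        sq_nonneg ((22+23*r)*(v 1) + 2*(13*r-8)*(v 2)),
        sq_nonneg (v 1 - v 2), sq_nonneg (v 1 + v 2)]
  have hsum : 0 < (v 0)^2 + (v 1)^2 + (v 2)^2 := by
    by_contra hcon
    push_neg at hcon
    have h0 : v 0 = 0 := by
      have h' : (v 0)^2 = 0 :=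
        le_antisymm (by nlinarith only [hcon, sq_nonneg (v 1), sq_nonneg (v 2)]) (sq_nonneg _)
      exact sq_eq_zero_iff.1 h'
    have h1 : v 1 = 0 := by
      have h' : (v 1)^2 = 0 :=
        le_antisymm (by nlinarith only [hcon, sq_nonneg (v 0), sq_nonneg (v 2)]) (sq_nonneg _)
      exact sq_eq_zero_iff.1 h'
    have h2 : v 2 = 0 := by
      have h' : (v 2)^2 = 0 :=
        le_antisymm (by nlinarith only [hcon, sq_nonneg (v 0), sq_nonneg (v 1)]) (sq_nonneg _)
      exact sq_eq_zero_iff.1 h'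
    exact hv (funext fun i => by fin_cases i <;> first | exact h0 | exact h1 | exact h2)
  linarith [hQ, hsum]

lemma theta_bounds : 2/5 ≤ Real.arccos ((Real.sqrt 6 - 1)/5)
    ∧ Real.arccos ((Real.sqrt 6 - 1)/5) ≤ π/2 := by
  have hr1 := r6ge
  have hr2 := r6le
  constructor
  · by_contra h
    push_neg at h
    have h0 : 0 ≤ Real.arccos ((Real.sqrt 6 - 1)/5) := Real.arccos_nonneg _
    have hlt : Real.cos (2/5) < Real.cos (Real.arccos ((Real.sqrt 6 - 1)/5)) :=
      Real.cos_lt_cos_of_nonneg_of_le_pi h0 (by linarith [Real.pi_gt_three]) h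
    have hcθ : Real.cos (Real.arccos ((Real.sqrt 6 - 1)/5)) = (Real.sqrt 6 - 1)/5 :=
      Real.cos_arccos (by linarith) (by linarith)
    have hlb := Real.one_sub_sq_div_two_le_cos (x := 2/5)
    rw [hcθ] at hlt
    norm_num at hlb hlt
    linarith
  · exact Real.arccos_le_pi_div_two.2 (by linarith)

end Stmt9aux

set_option maxHeartbeats 2000000

open Stmt9aux in
open Real in
/-- at the two listed points the gradient of `L₁` vanishes,
`L₁ = (3/50)·(9+√6)`, and the Hessian is negative definite; hence these points
are strict local (in fact global) maxima of `L₁`. -/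
theorem stmt9 (p : Fin 3 → ℝ)
    (hp : p = ![π, arccos ((1 - Real.sqrt 6)/5), (1/2) * arccos (1/(1 + Real.sqrt 6))]
      ∨ p = ![0, arccos ((1 - Real.sqrt 6)/5), π - (1/2) * arccos (1/(1 + Real.sqrt 6))]) :
    -- the gradient of L₁ vanishes at p
    fderiv ℝ L1v p = 0
    -- L₁ takes the value (3/50)·(9+√6) at p
    ∧ L1v p = (3/50) * (9 + Real.sqrt 6)
    -- the Hessian is negative definite
    ∧ (∀ v : Fin 3 → ℝ, v ≠ 0 → v ⬝ᵥ (hessian L1v p).mulVec v < 0)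
    -- hence p is a strict local maximum
    ∧ (∃ ε > (0:ℝ), ∀ y : Fin 3 → ℝ, y ≠ p → dist y p < ε → L1v y < L1v p)
    -- and in fact a global maximum
    ∧ (∀ y : Fin 3 → ℝ, L1v y ≤ L1v p) := by
  have hr : (Real.sqrt 6)^2 = 6 := r6sq
  have hr1 : 2 ≤ Real.sqrt 6 := r6ge
  have hr2 : Real.sqrt 6 ≤ 5/2 := r6le
  have h1r : 1/(1 + Real.sqrt 6) = (Real.sqrt 6 - 1)/5 := by
    rw [div_eq_div_iff (by positivity) (by norm_num)]
    linear_combination -hr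
  have hθlb := theta_bounds.1
  have hθub := theta_bounds.2
  have hθcos : Real.cos (Real.arccos ((Real.sqrt 6 - 1)/5)) = (Real.sqrt 6 - 1)/5 :=
    Real.cos_arccos (by linarith) (by linarith)
  have hθpos : 0 < Real.arccos ((Real.sqrt 6 - 1)/5) := by linarith
  have hπ3 := Real.pi_gt_three
  have hπ4 := Real.pi_le_four
  have hθsin : 0 < Real.sin (Real.arccos ((Real.sqrt 6 - 1)/5)) :=
    Real.sin_pos_of_pos_of_lt_pi hθpos (by linarith)
  obtain ⟨σ, hS, e0, e1, e2, hσpt⟩ :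
      ∃ σ : ℝ, σ^2 = 1
        ∧ p 0 = (if σ = 1 then π else 0)
        ∧ p 1 = Real.arccos ((1 - Real.sqrt 6)/5)
        ∧ (p 2 = (if σ = 1 then (1/2) * Real.arccos ((Real.sqrt 6 - 1)/5)
            else π - (1/2) * Real.arccos ((Real.sqrt 6 - 1)/5)))
        ∧ (σ = 1 ∨ σ = -1) := by
    rcases hp with hp | hp
    · exact ⟨1, by norm_num, by rw [hp]; simp, by rw [hp]; simp,
        by rw [hp]; simp [h1r], Or.inl rfl⟩
    · refine ⟨-1, by norm_num, by rw [hp]; norm_num, by rw [hp]; simp, ?_, Or.inr rfl⟩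
      rw [hp]; norm_num [h1r]; rfl
  have hp1θ : p 1 = π - Real.arccos ((Real.sqrt 6 - 1)/5) := by
    rw [e1, show (1 - Real.sqrt 6)/5 = -((Real.sqrt 6 - 1)/5) by ring, Real.arccos_neg]
  have h2p2 : 2 * p 2 = (if σ = 1 then Real.arccos ((Real.sqrt 6 - 1)/5)
      else 2*π - Real.arccos ((Real.sqrt 6 - 1)/5)) := by
    rcases hσpt with h | h <;> rw [h] at e2 ⊢ <;> norm_num at e2 ⊢ <;> rw [e2] <;> ring
  have h0c : Real.cos (p 0) = -σ := by
    rcases hσpt with h | h <;> rw [h] at e0 ⊢ <;> norm_num at e0 ⊢ <;> rw [e0] <;> simp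
  have h0s : Real.sin (p 0) = 0 := by
    rcases hσpt with h | h <;> rw [h] at e0 <;> norm_num at e0 <;> rw [e0] <;> simp
  have hc1 : Real.cos (p 1) = (1 - Real.sqrt 6)/5 := by
    rw [e1]; exact Real.cos_arccos (by linarith) (by linarith)
  have hA : Real.sin (p 1)^2 = (18 + 2*Real.sqrt 6)/25 := by
    have h := Real.sin_sq_add_cos_sq (p 1)
    rw [hc1] at h
    linear_combination h - (1/25)*hr
  have hs1pos : 0 < Real.sin (p 1) := by
    rw [hp1θ, Real.sin_pi_sub]; exact hθsin
  have hB : Real.sin (p 1/2)^2 = (4 + Real.sqrt 6)/10 := by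
    rw [sin_half_sq, hc1]; ring
  have hCh : Real.cos (p 1/2)^2 = (6 - Real.sqrt 6)/10 := by
    rw [cos_half_sq, hc1]; ring
  have hD : Real.sin (p 1/2)*Real.cos (p 1/2) = Real.sin (p 1)/2 := sin_half_mul (p 1)
  have hc2 : Real.cos (2*p 2) = (Real.sqrt 6 - 1)/5 := by
    rcases hσpt with h | h <;> rw [h] at h2p2 <;> norm_num at h2p2 <;> rw [h2p2]
    · exact hθcos
    · rw [Real.cos_two_pi_sub]; exact hθcos
  have hsθp : Real.sin (Real.arccos ((Real.sqrt 6 - 1)/5)) = Real.sin (p 1) := by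
    rw [hp1θ, Real.sin_pi_sub]
  have hs2 : Real.sin (2*p 2) = σ*Real.sin (p 1) := by
    rcases hσpt with h | h <;> rw [h] at h2p2 ⊢ <;> norm_num at h2p2 ⊢ <;> rw [h2p2]
    · rw [hsθp]
    · rw [Real.sin_two_pi_sub, hsθp]
  have hE : Real.sin (p 2)^2 = (6 - Real.sqrt 6)/10 := by
    have h := sin_half_sq (2*p 2)
    rw [show 2*p 2/2 = p 2 by ring, hc2] at h
    rw [h]; ring
  have hF : Real.cos (p 2)^2 = (4 + Real.sqrt 6)/10 := by
    have h := cos_half_sq (2*p 2)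
    rw [show 2*p 2/2 = p 2 by ring, hc2] at h
    rw [h]; ring
  have hG : Real.sin (p 2)*Real.cos (p 2) = σ*Real.sin (p 1)/2 := by
    have h := sin_half_mul (2*p 2)
    rw [show 2*p 2/2 = p 2 by ring, hs2] at h
    rw [h]
  obtain ⟨hval, hhess⟩ :=
    at_point p (Real.sqrt 6) σ hr hS h0c h0s hc1 hA hB hCh hD hc2 hs2 hE hF hG
  have hglob : ∀ y : Fin 3 → ℝ, L1v y ≤ L1v p := by
    intro y
    rw [hval]
    exact global_bound y
  have hloc : IsLocalMax L1v p := Filter.Eventually.of_forall hglob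
  refine ⟨hloc.fderiv_eq_zero, hval, qform_neg _ σ hr hr1 hr2 hS _ hhess, ?_, hglob⟩
  -- strict local maximality
  refine ⟨1/5, by norm_num, fun y hne hdist => ?_⟩
  rcases lt_or_eq_of_le (hglob y) with hlt | heq
  · exact hlt
  exfalso
  apply hne
  have hy : L1v y = (3/50)*(9 + Real.sqrt 6) := by rw [heq, hval]
  obtain ⟨hx, ht, hmix⟩ := max_point_eqs y hy
  have hd0 : |y 0 - p 0| < 1/5 := by
    have h := dist_le_pi_dist y p 0
    rw [Real.dist_eq] at h
    linarith
  have hd1 : |y 1 - p 1| < 1/5 := by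
    have h := dist_le_pi_dist y p 1
    rw [Real.dist_eq] at h
    linarith
  have hd2 : |y 2 - p 2| < 1/5 := by
    have h := dist_le_pi_dist y p 2
    rw [Real.dist_eq] at h
    linarith
  rw [abs_sub_lt_iff] at hd0 hd1 hd2
  -- y 1 = p 1
  have hy1 : y 1 = p 1 := by
    apply Real.injOn_cos
    · constructor
      · have h : π - Real.arccos ((Real.sqrt 6 - 1)/5) - 1/5 < y 1 := by
          rw [← hp1θ]; linarith [hd1.2]
        linarith
      · have h : y 1 < π - Real.arccos ((Real.sqrt 6 - 1)/5) + 1/5 := by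
          rw [← hp1θ]; linarith [hd1.1]
        linarith
    · exact ⟨by rw [e1]; exact Real.arccos_nonneg _, by rw [e1]; exact Real.arccos_le_pi _⟩
    · rw [hx, hc1]
  have hs1y : 0 < Real.sin (y 1) := by rw [hy1]; exact hs1pos
  rcases hσpt with hσ1 | hσ1
  · -- first point
    rw [hσ1] at h2p2; norm_num at h2p2
    have h2y2 : 2*y 2 = Real.arccos ((Real.sqrt 6 - 1)/5) := by
      apply Real.injOn_cos
      · constructor
        · have h : 2*p 2 - 2/5 < 2*y 2 := by linarith [hd2.2]
          rw [h2p2] at h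
          linarith
        · have h : 2*y 2 < 2*p 2 + 2/5 := by linarith [hd2.1]
          rw [h2p2] at h
          linarith
      · exact ⟨Real.arccos_nonneg _, Real.arccos_le_pi _⟩
      · rw [ht, hθcos]
    have hy2 : y 2 = p 2 := by linarith [h2p2, h2y2]
    have hupos : 0 < Real.sin (2*y 2) := by rw [h2y2]; exact hθsin
    have hprod : 0 < Real.sin (y 1) * Real.sin (2*y 2) := mul_pos hs1y hupos
    rw [abs_of_pos hs1y, abs_of_pos hupos] at hmix
    have hc0 : Real.cos (y 0) = -1 := by
      have h' : Real.cos (y 0) * (Real.sin (y 1) * Real.sin (2*y 2))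
          = (-1) * (Real.sin (y 1) * Real.sin (2*y 2)) := by linear_combination hmix
      exact mul_right_cancel₀ (ne_of_gt hprod) h'
    have hp0 : p 0 = π := by rw [hσ1] at e0; simpa using e0
    have hy0 : y 0 = π := by
      have h1 : Real.cos (y 0 - π) = 1 := by rw [Real.cos_sub_pi, hc0]; norm_num
      obtain ⟨n, hn⟩ := (Real.cos_eq_one_iff _).1 h1
      rw [hp0] at hd0
      have hn0 : n = 0 := by
        by_contra hne0
        have h1n : (1:ℝ) ≤ |(n:ℝ)| := by exact_mod_cast Int.one_le_abs hne0
        have habs : |(n:ℝ)*(2*π)| = |(n:ℝ)| * (2*π) := by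
          rw [abs_mul, abs_of_pos (by linarith : (0:ℝ) < 2*π)]
        have hsmall : |(n:ℝ)*(2*π)| < 1/5 := by
          rw [hn]
          exact abs_lt.2 ⟨by linarith [hd0.2], by linarith [hd0.1]⟩
        rw [habs] at hsmall
        nlinarith only [hsmall, h1n, hπ3]
      rw [hn0] at hn
      push_cast at hn
      linarith
    funext i
    fin_cases i
    · show y 0 = p 0; rw [hy0, hp0]
    · exact hy1
    · exact hy2
  · -- second point
    rw [hσ1] at h2p2; norm_num at h2p2
    have h2y2 : 2*π - 2*y 2 = Real.arccos ((Real.sqrt 6 - 1)/5) := by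
      apply Real.injOn_cos
      · constructor
        · have h : 2*y 2 < 2*p 2 + 2/5 := by linarith [hd2.1]
          rw [h2p2] at h
          linarith
        · have h : 2*p 2 - 2/5 < 2*y 2 := by linarith [hd2.2]
          rw [h2p2] at h
          linarith
      · exact ⟨Real.arccos_nonneg _, Real.arccos_le_pi _⟩
      · rw [Real.cos_two_pi_sub, ht, hθcos]
    have hy2 : y 2 = p 2 := by linarith [h2p2, h2y2]
    have huneg : Real.sin (2*y 2) < 0 := by
      have h' : 2*y 2 = 2*π - Real.arccos ((Real.sqrt 6 - 1)/5) := by linarith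
      rw [h', Real.sin_two_pi_sub]
      linarith
    have hprod : Real.sin (y 1) * Real.sin (2*y 2) < 0 := mul_neg_of_pos_of_neg hs1y huneg
    rw [abs_of_pos hs1y, abs_of_neg huneg] at hmix
    have hc0 : Real.cos (y 0) = 1 := by
      have h' : Real.cos (y 0) * (Real.sin (y 1) * Real.sin (2*y 2))
          = 1 * (Real.sin (y 1) * Real.sin (2*y 2)) := by linear_combination hmix
      exact mul_right_cancel₀ (ne_of_lt hprod) h'
    have hp0 : p 0 = 0 := by rw [hσ1] at e0; norm_num at e0; exact e0
    have hy0 : y 0 = 0 := by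
      obtain ⟨n, hn⟩ := (Real.cos_eq_one_iff _).1 hc0
      rw [hp0] at hd0
      have hn0 : n = 0 := by
        by_contra hne0
        have h1n : (1:ℝ) ≤ |(n:ℝ)| := by exact_mod_cast Int.one_le_abs hne0
        have habs : |(n:ℝ)*(2*π)| = |(n:ℝ)| * (2*π) := by
          rw [abs_mul, abs_of_pos (by linarith : (0:ℝ) < 2*π)]
        have hsmall : |(n:ℝ)*(2*π)| < 1/5 := by
          rw [hn]
          exact abs_lt.2 ⟨by linarith [hd0.2], by linarith [hd0.1]⟩
        rw [habs] at hsmall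
        nlinarith only [hsmall, h1n, hπ3]
      rw [hn0] at hn
      push_cast at hn
      linarith
    funext i
    fin_cases i
    · show y 0 = p 0; rw [hy0, hp0]
    · exact hy1
    · exact hy2
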